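/- For the Werner case with λ ∈ [√3/2, 1], the constrained optimum occurs at n_x = −1/√(4λ²−2), and substituting gives ε_min = 2λ√(4λ²−2)/(4λ²−1); moreover ε_min(√3/2) = √3/2 and ε_min(1) = 2√2/3, and ε_min is continuous at λ = √3/2. -/

import Mathlib

noncomputable section

/-- ε(n_x, λ) = −λ·[n_x³ − (1−n_x²)√(λ² + n_x²(1−2λ²))]/[n_x² + (1−n_x²)²λ²]. -/
def epsFun (lam nx : ℝ) : ℝ :=
  -lam * (nx ^ 3 - (1 - nx ^ 2) * Real.sqrt (lam ^ 2 + nx ^ 2 * (1 - 2 * lam ^ 2))) /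
    (nx ^ 2 + (1 - nx ^ 2) ^ 2 * lam ^ 2)

/-- The piecewise minimal measurement strength for the Werner family. -/
def wernerEpsMin (lam : ℝ) : ℝ :=
  if lam ≤ Real.sqrt 3 / 2 then lam
  else 2 * lam * Real.sqrt (4 * lam ^ 2 - 2) / (4 * lam ^ 2 - 1)

/-- The key algebraic inequality, after substitution `m = -n_x`, `s = √(4λ²-2)`,
`B = 2√(λ² + m²(1-2λ²))`. -/
lemma werner_key_ineq (m s B : ℝ) (hm0 : 0 < m) (hm1 : m ≤ 1) (hs1 : 1 ≤ s) (hss : s^2 ≤ 2)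
    (hB : 0 ≤ B) (hB2 : B^2 = s^2 + 2 - 2*m^2*s^2) :
    s*(4*m^2 + (1-m^2)^2*(s^2+2)) - 2*m^3*(s^2+1) ≤ (1-m^2)*(s^2+1)*B := by
  have hm2 : m^2 ≤ 1 := by nlinarith
  have hA : 0 ≤ (1-m^2)*(s^2+1) := by nlinarith
  have hAB : 0 ≤ (1-m^2)*(s^2+1)*B := mul_nonneg hA hB
  set RHS := s*(4*m^2 + (1-m^2)^2*(s^2+2)) - 2*m^3*(s^2+1) with hRHS
  rcases le_or_gt RHS 0 with h | h
  · linarith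
  · have hVpos : (0:ℝ) < 4*(2+s^2)^2 := by positivity
    have hV4 : 0 ≤ 4*(2+s^2)^2 * ((2+s^2) - m^2*(s^4+5*s^2+2) + m^4*(2+s^2)^2) := by
      nlinarith [sq_nonneg (2*(2+s^2)^2*m^2 - (s^4+5*s^2+2)),
        mul_nonneg (by linarith : (0:ℝ) ≤ 2 - s^2)
          (by positivity : (0:ℝ) ≤ s^6+8*s^4+21*s^2+14)]
    have hV : 0 ≤ (2+s^2) - m^2*(s^4+5*s^2+2) + m^4*(2+s^2)^2 := by
      nlinarith [hV4, hVpos]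
    have hQ : 0 ≤ 2*m*RHS + (1-m^2)*((2+s^2) - m^2*(s^4+5*s^2+2) + m^4*(2+s^2)^2) := by
      have := mul_nonneg (by linarith : (0:ℝ) ≤ 1-m^2) hV
      nlinarith [mul_pos hm0 h]
    have hP : ((1-m^2)*(s^2+1)*B)^2 - RHS^2
        = (m*s-1)^2 * (2*m*RHS + (1-m^2)*((2+s^2) - m^2*(s^4+5*s^2+2) + m^4*(2+s^2)^2)) := by
      rw [hRHS]
      linear_combination ((1-m^2)*(s^2+1))^2 * hB2
    nlinarith [hP, mul_nonneg (sq_nonneg (m*s-1)) hQ, hAB, h]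

/-- The value of `epsFun` at the optimum. -/
lemma werner_eps_value (lam : ℝ) (h1 : Real.sqrt 3 / 2 ≤ lam) (h2 : lam ≤ 1) :
    epsFun lam (-(1 / Real.sqrt (4 * lam ^ 2 - 2)))
      = 2 * lam * Real.sqrt (4 * lam ^ 2 - 2) / (4 * lam ^ 2 - 1) := by
  have h3 : (Real.sqrt 3)^2 = 3 := Real.sq_sqrt (by norm_num)
  have hl2 : 3/4 ≤ lam^2 := by nlinarith [Real.sqrt_nonneg 3]
  have hl2' : lam^2 ≤ 1 := by nlinarith [Real.sqrt_nonneg 3]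
  set s := Real.sqrt (4 * lam ^ 2 - 2) with hsdef
  have hs2 : s^2 = 4*lam^2 - 2 := Real.sq_sqrt (by linarith)
  have hs1 : 1 ≤ s := by nlinarith [Real.sqrt_nonneg (4*lam^2-2)]
  have hspos : 0 < s := by linarith
  have hlam : 0 < lam := by nlinarith [Real.sqrt_pos.mpr (show (0:ℝ)<3 by norm_num)]
  have harg : lam ^ 2 + (-(1/s)) ^ 2 * (1 - 2 * lam ^ 2) = (s/2)^2 := by
    field_simp
    linear_combination (2 - s^2) * hs2
  rw [epsFun, harg, Real.sqrt_sq (by positivity)]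
  have hD : (-(1/s)) ^ 2 + (1 - (-(1/s)) ^ 2) ^ 2 * lam ^ 2 ≠ 0 := by
    have h0 : (0:ℝ) < (1/s)^2 := by positivity
    nlinarith [mul_nonneg (sq_nonneg (1 - (-(1/s))^2)) (sq_nonneg lam)]
  rw [div_eq_div_iff hD (by nlinarith : (4:ℝ)*lam^2 - 1 ≠ 0)]
  field_simp
  linear_combination (-(s^2+1)) * hs2

/-- Minimality of the optimum over `n_x ∈ [-1, 0)`. -/
lemma werner_eps_min (lam : ℝ) (h1 : Real.sqrt 3 / 2 ≤ lam) (h2 : lam ≤ 1)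
    (nx : ℝ) (hn1 : -1 ≤ nx) (hn0 : nx < 0) :
    2 * lam * Real.sqrt (4 * lam ^ 2 - 2) / (4 * lam ^ 2 - 1) ≤ epsFun lam nx := by
  have h3 : (Real.sqrt 3)^2 = 3 := Real.sq_sqrt (by norm_num)
  have hl2 : 3/4 ≤ lam^2 := by nlinarith [Real.sqrt_nonneg 3]
  have hl2' : lam^2 ≤ 1 := by nlinarith [Real.sqrt_nonneg 3]
  have hlam : 0 < lam := by nlinarith [Real.sqrt_pos.mpr (show (0:ℝ)<3 by norm_num)]
  set s := Real.sqrt (4 * lam ^ 2 - 2) with hsdef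
  have hs2 : s^2 = 4*lam^2 - 2 := Real.sq_sqrt (by linarith)
  have hs1 : 1 ≤ s := by nlinarith [Real.sqrt_nonneg (4*lam^2-2)]
  have hss : s^2 ≤ 2 := by linarith
  have hnx21 : nx^2 ≤ 1 := by
    nlinarith [mul_nonneg (show (0:ℝ) ≤ 1+nx by linarith) (show (0:ℝ) ≤ -nx by linarith)]
  have hargnn : 0 ≤ lam ^ 2 + nx ^ 2 * (1 - 2 * lam ^ 2) := by
    nlinarith [mul_nonneg (show (0:ℝ) ≤ 2*lam^2-1 by linarith) (show (0:ℝ) ≤ 1-nx^2 by linarith)]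
  set R := Real.sqrt (lam ^ 2 + nx ^ 2 * (1 - 2 * lam ^ 2)) with hRdef
  have hR0 : 0 ≤ R := Real.sqrt_nonneg _
  have hR2 : R^2 = lam ^ 2 + nx ^ 2 * (1 - 2 * lam ^ 2) := Real.sq_sqrt hargnn
  have hB2 : (2*R)^2 = s^2 + 2 - 2*(-nx)^2*s^2 := by
    linear_combination 4*hR2 + (2*nx^2 - 1)*hs2
  have key := werner_key_ineq (-nx) s (2*R) (by linarith) (by linarith) hs1 hss (by linarith) hB2
  have hnx2 : 0 < nx^2 := by nlinarith
  have hD : 0 < nx ^ 2 + (1 - nx ^ 2) ^ 2 * lam ^ 2 := by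
    nlinarith [mul_nonneg (sq_nonneg (1-nx^2)) (sq_nonneg lam)]
  rw [epsFun, ← hRdef, div_le_div_iff₀ (by nlinarith) hD]
  have hexp : -lam * (nx ^ 3 - (1 - nx ^ 2) * R) * (4 * lam ^ 2 - 1)
      - 2 * lam * s * (nx ^ 2 + (1 - nx ^ 2) ^ 2 * lam ^ 2)
      = lam/2 * (((1-(-nx)^2)*(s^2+1)*(2*R))
          - (s*(4*(-nx)^2 + (1-(-nx)^2)^2*(s^2+2)) - 2*(-nx)^3*(s^2+1))) := by
    linear_combination (lam*(nx^3 - (1-nx^2)*R) + lam*s*(1-nx^2)^2/2) * hs2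
  have h0 : 0 ≤ lam/2 * (((1-(-nx)^2)*(s^2+1)*(2*R))
      - (s*(4*(-nx)^2 + (1-(-nx)^2)^2*(s^2+2)) - 2*(-nx)^3*(s^2+1))) :=
    mul_nonneg (by linarith) (by linarith [key])
  linarith [hexp, h0]

/-- for λ ∈ [√3/2,1] the constrained optimum over n_x ∈ [−1,0) occurs at
n_x = −1/√(4λ²−2) with value 2λ√(4λ²−2)/(4λ²−1); moreover ε_min(√3/2) = √3/2,
ε_min(1) = 2√2/3, and ε_min is continuous at λ = √3/2. -/
theorem werner_branch_two :
    (∀ lam ∈ Set.Icc (Real.sqrt 3 / 2) (1 : ℝ),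
      (∀ nx ∈ Set.Ico (-1 : ℝ) 0,
        epsFun lam (-(1 / Real.sqrt (4 * lam ^ 2 - 2))) ≤ epsFun lam nx) ∧
      epsFun lam (-(1 / Real.sqrt (4 * lam ^ 2 - 2)))
        = 2 * lam * Real.sqrt (4 * lam ^ 2 - 2) / (4 * lam ^ 2 - 1)) ∧
    wernerEpsMin (Real.sqrt 3 / 2) = Real.sqrt 3 / 2 ∧
    wernerEpsMin 1 = 2 * Real.sqrt 2 / 3 ∧
    ContinuousAt wernerEpsMin (Real.sqrt 3 / 2) := by
  refine ⟨fun lam hlam => ?_, ?_, ?_, ?_⟩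
  · refine ⟨fun nx hnx => ?_, werner_eps_value lam hlam.1 hlam.2⟩
    rw [werner_eps_value lam hlam.1 hlam.2]
    exact werner_eps_min lam hlam.1 hlam.2 nx hnx.1 hnx.2
  · simp [wernerEpsMin]
  · have h3 : (Real.sqrt 3)^2 = 3 := Real.sq_sqrt (by norm_num)
    have hlt : Real.sqrt 3 / 2 < 1 := by nlinarith [Real.sqrt_nonneg 3]
    rw [wernerEpsMin, if_neg (by linarith)]
    norm_num
  · have h3 : (Real.sqrt 3)^2 = 3 := Real.sq_sqrt (by norm_num)
    set c := Real.sqrt 3 / 2 with hc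
    have hc2 : c^2 = 3/4 := by rw [hc, div_pow, h3]; norm_num
    have hcv : wernerEpsMin c = c := by rw [wernerEpsMin, if_pos hc.le]
    rw [ContinuousAt, hcv]
    refine Filter.Tendsto.mono_left ?_ (le_of_eq (nhdsLE_sup_nhdsGT c).symm)
    rw [Filter.tendsto_sup]
    constructor
    · refine Filter.Tendsto.congr' ?_ (Filter.tendsto_id.mono_left nhdsWithin_le_nhds)
      filter_upwards [eventually_mem_nhdsWithin] with x hx
      simp only [Set.mem_Iic] at hx
      simp [wernerEpsMin, hx, ← hc]
    · have hg : ContinuousAt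
          (fun l : ℝ => 2 * l * Real.sqrt (4 * l ^ 2 - 2) / (4 * l ^ 2 - 1)) c := by
        apply ContinuousAt.div
        · exact (continuousAt_const.mul continuousAt_id).mul
            (Real.continuous_sqrt.continuousAt.comp (by fun_prop))
        · fun_prop
        · nlinarith
      have hgc : 2 * c * Real.sqrt (4 * c ^ 2 - 2) / (4 * c ^ 2 - 1) = c := by
        rw [hc2]; norm_num
      have h2 : Filter.Tendsto (fun l : ℝ => 2 * l * Real.sqrt (4 * l ^ 2 - 2) / (4 * l ^ 2 - 1))
          (nhdsWithin c (Set.Ioi c)) (nhds c) := by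
        have := hg.continuousWithinAt (s := Set.Ioi c)
        rw [ContinuousWithinAt, hgc] at this
        exact this
      refine Filter.Tendsto.congr' ?_ h2
      filter_upwards [eventually_mem_nhdsWithin] with x hx
      simp only [Set.mem_Ioi] at hx
      simp [wernerEpsMin, not_le.mpr hx, ← hc]
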